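/- AP is contained in AWP: every partial function f :⊆ ℝⁿ → ℝᵐ that belongs to AP also belongs to AWP. -/

import Mathlib

noncomputable section

/-- Evaluation of a vector of multivariate polynomials at a point. -/
def pEval {d e : ℕ} (p : Fin e → MvPolynomial (Fin d) ℝ) (x : Fin d → ℝ) : Fin e → ℝ :=
  fun i => MvPolynomial.eval x (p i)

/-- Length of the solution curve of the PIVP `y' = p(y)` on `[0, t]`
(the sup norm of the derivative is integrated). -/
def pLen {d : ℕ} (p : Fin d → MvPolynomial (Fin d) ℝ) (y : ℝ → Fin d → ℝ) (t : ℝ) : ℝ :=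
  ∫ s in (0:ℝ)..t, ‖pEval p (y s)‖

/-- `Ω : ℝ₊² → ℝ₊` is a polynomial function. -/
def IsPolyFun2 (Ω : ℝ → ℝ → ℝ) : Prop :=
  (∃ P : MvPolynomial (Fin 2) ℝ, ∀ a b : ℝ, Ω a b = MvPolynomial.eval ![a, b] P) ∧
  ∀ a b : ℝ, 0 ≤ a → 0 ≤ b → 0 ≤ Ω a b

/-- The class `AP` of polynomial-length computable partial functions `f :⊆ ℝⁿ → ℝᵐ`
(`dom` is the domain of `f`). -/
def AP {n m : ℕ} (dom : Set (Fin n → ℝ)) (f : (Fin n → ℝ) → (Fin m → ℝ)) : Prop :=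
  ∃ (d : ℕ) (hd : m ≤ d) (p : Fin d → MvPolynomial (Fin d) ℝ)
    (q : Fin d → MvPolynomial (Fin n) ℝ) (Ω : ℝ → ℝ → ℝ),
    IsPolyFun2 Ω ∧
    ∀ x ∈ dom, ∃ y : ℝ → Fin d → ℝ,
      (y 0 = fun i => MvPolynomial.eval x (q i)) ∧
      (∀ t : ℝ, 0 ≤ t → HasDerivAt y (pEval p (y t)) t) ∧
      (∀ t : ℝ, 0 ≤ t → ∀ μ : ℝ, 0 ≤ μ → Ω ‖x‖ μ ≤ pLen p y t →
        ‖(fun i : Fin m => y t (Fin.castLE hd i)) - f x‖ ≤ Real.exp (-μ)) ∧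
      (∀ t : ℝ, 0 ≤ t → t ≤ pLen p y t)

/-- `Υ : ℝ₊³ → ℝ₊` is a polynomial function. -/
def IsPolyFun3 (Υ : ℝ → ℝ → ℝ → ℝ) : Prop :=
  (∃ P : MvPolynomial (Fin 3) ℝ, ∀ a b c : ℝ, Υ a b c = MvPolynomial.eval ![a, b, c] P) ∧
  ∀ a b c : ℝ, 0 ≤ a → 0 ≤ b → 0 ≤ c → 0 ≤ Υ a b c

/-- The class `AWP` of weakly computable partial functions `f :⊆ ℝⁿ → ℝᵐ`. -/
def AWP {n m : ℕ} (dom : Set (Fin n → ℝ)) (f : (Fin n → ℝ) → (Fin m → ℝ)) : Prop :=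
  ∃ (Ω : ℝ → ℝ → ℝ) (Υ : ℝ → ℝ → ℝ → ℝ), IsPolyFun2 Ω ∧ IsPolyFun3 Υ ∧
  ∃ (d : ℕ) (hd : m ≤ d) (p : Fin d → MvPolynomial (Fin d) ℝ)
    (q : Fin d → MvPolynomial (Fin (n + 1)) ℝ),
    ∀ x ∈ dom, ∀ μ : ℝ, 0 ≤ μ → ∃ y : ℝ → Fin d → ℝ,
      (y 0 = fun i => MvPolynomial.eval (Fin.snoc x μ) (q i)) ∧
      (∀ t : ℝ, 0 ≤ t → HasDerivAt y (pEval p (y t)) t) ∧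
      (∀ t : ℝ, 0 ≤ t → Ω ‖x‖ μ ≤ t →
        ‖(fun i : Fin m => y t (Fin.castLE hd i)) - f x‖ ≤ Real.exp (-μ)) ∧
      (∀ t : ℝ, 0 ≤ t → ‖y t‖ ≤ Υ ‖x‖ μ t)

section AuxiliaryLemmas
open MvPolynomial


lemma mv_hasDerivAt {k : ℕ} (P : MvPolynomial (Fin k) ℝ)
    {y : ℝ → Fin k → ℝ} {v : Fin k → ℝ} {t : ℝ} (hy : HasDerivAt y v t) :
    HasDerivAt (fun s => MvPolynomial.eval (y s) P)
      (∑ i, MvPolynomial.eval (y t) (MvPolynomial.pderiv i P) * v i) t := by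
  induction P using MvPolynomial.induction_on with
  | C a => simpa using hasDerivAt_const t (a : ℝ)
  | add P Q hP hQ =>
      have : HasDerivAt (fun s => MvPolynomial.eval (y s) P + MvPolynomial.eval (y s) Q) _ t :=
        hP.add hQ
      simpa [Finset.sum_add_distrib, add_mul] using this
  | mul_X P j hP =>
      have hyj : HasDerivAt (fun s => y s j) (v j) t := hasDerivAt_pi.mp hy j
      have h : HasDerivAt (fun s => MvPolynomial.eval (y s) P * y s j) _ t := hP.mul hyj
      have key : ∀ i : Fin k, MvPolynomial.eval (y t) (MvPolynomial.pderiv i (P * X j)) * v i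
          = MvPolynomial.eval (y t) (MvPolynomial.pderiv i P) * v i * y t j
            + MvPolynomial.eval (y t) P * (if i = j then v i else 0) := by
        intro i
        simp only [pderiv_mul, pderiv_X, map_add, map_mul, eval_X, Pi.single_apply]
        by_cases hij : i = j
        · simp [hij]; ring
        · have hji : ¬ j = i := fun h => hij h.symm
          simp [hij, hji]; ring
      simp only [map_mul, eval_X]
      convert h using 1
      rw [Finset.sum_congr rfl fun i _ => key i, Finset.sum_add_distrib, ← Finset.sum_mul,
        ← Finset.mul_sum]
      congr 1
      rw [Finset.sum_ite_eq' Finset.univ j fun i => v i]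
      simp

lemma mv_growth {k : ℕ} (P : MvPolynomial (Fin k) ℝ) :
    ∃ C K, 0 ≤ C ∧ ∀ z : Fin k → ℝ, |MvPolynomial.eval z P| ≤ C * (1 + ‖z‖) ^ K := by
  induction P using MvPolynomial.induction_on with
  | C a => exact ⟨|a|, 0, abs_nonneg a, fun z => by simp⟩
  | add P Q hP hQ =>
      obtain ⟨C₁, K₁, hC₁, h₁⟩ := hP
      obtain ⟨C₂, K₂, hC₂, h₂⟩ := hQ
      refine ⟨C₁ + C₂, max K₁ K₂, by positivity, fun z => ?_⟩
      have hz : (1:ℝ) ≤ 1 + ‖z‖ := by linarith [norm_nonneg z]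
      have e₁ : (1+‖z‖)^K₁ ≤ (1+‖z‖)^(max K₁ K₂) := pow_le_pow_right₀ hz (le_max_left _ _)
      have e₂ : (1+‖z‖)^K₂ ≤ (1+‖z‖)^(max K₁ K₂) := pow_le_pow_right₀ hz (le_max_right _ _)
      calc |eval z (P + Q)| ≤ |eval z P| + |eval z Q| := by simpa using abs_add_le _ _
        _ ≤ C₁ * (1+‖z‖)^K₁ + C₂ * (1+‖z‖)^K₂ := add_le_add (h₁ z) (h₂ z)
        _ ≤ C₁ * (1+‖z‖)^(max K₁ K₂) + C₂ * (1+‖z‖)^(max K₁ K₂) := by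
            apply add_le_add <;> apply mul_le_mul_of_nonneg_left (by assumption) (by assumption)
        _ = (C₁ + C₂) * (1+‖z‖)^(max K₁ K₂) := by ring
  | mul_X P j hP =>
      obtain ⟨C, K, hC, h⟩ := hP
      refine ⟨C, K + 1, hC, fun z => ?_⟩
      have h1 : |z j| ≤ 1 + ‖z‖ := by
        have := norm_le_pi_norm z j
        simp only [Real.norm_eq_abs] at this
        linarith [norm_nonneg z]
      calc |eval z (P * X j)| = |eval z P| * |z j| := by simp [abs_mul]
        _ ≤ (C * (1+‖z‖)^K) * (1 + ‖z‖) := by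
            apply mul_le_mul (h z) h1 (abs_nonneg _) (by positivity)
        _ = C * (1+‖z‖)^(K+1) := by ring

/-- `N(z) = 1 + ∑ pᵢ(z)²`, a polynomial dominating `‖p(z)‖` and `1`. -/
def NPoly {d : ℕ} (p : Fin d → MvPolynomial (Fin d) ℝ) : MvPolynomial (Fin d) ℝ :=
  1 + ∑ i, (p i) ^ 2

/-- `g = ⟨∇N, p⟩`. -/
def gPoly {d : ℕ} (p : Fin d → MvPolynomial (Fin d) ℝ) : MvPolynomial (Fin d) ℝ :=
  ∑ i, (MvPolynomial.pderiv i (NPoly p)) * p i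

/-- `σ = 1 + g²`, the slowdown-rate polynomial. -/
def sPoly {d : ℕ} (p : Fin d → MvPolynomial (Fin d) ℝ) : MvPolynomial (Fin d) ℝ :=
  1 + (gPoly p) ^ 2

/-- The rescaled vector field on `ℝ^(d+1)`: `z' = u·p(z)`, `u' = -σ(z)·u³`. -/
def pNew {d : ℕ} (p : Fin d → MvPolynomial (Fin d) ℝ) :
    Fin (d + 1) → MvPolynomial (Fin (d + 1)) ℝ :=
  Fin.snoc (fun j => X (Fin.last d) * rename Fin.castSucc (p j))
    (-(X (Fin.last d)) ^ 3 * rename Fin.castSucc (sPoly p))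

/-- Initial condition polynomials: `z(0) = q(x)`, `u(0) = 1`. -/
def qNew {n d : ℕ} (q : Fin d → MvPolynomial (Fin n) ℝ) :
    Fin (d + 1) → MvPolynomial (Fin (n + 1)) ℝ :=
  Fin.snoc (fun j => rename Fin.castSucc (q j)) 1

lemma eval_NPoly {d : ℕ} (p : Fin d → MvPolynomial (Fin d) ℝ) (z : Fin d → ℝ) :
    MvPolynomial.eval z (NPoly p) = 1 + ∑ i, (MvPolynomial.eval z (p i)) ^ 2 := by
  simp [NPoly]

lemma one_le_eval_NPoly {d : ℕ} (p : Fin d → MvPolynomial (Fin d) ℝ) (z : Fin d → ℝ) :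
    1 ≤ MvPolynomial.eval z (NPoly p) := by
  rw [eval_NPoly]
  have : 0 ≤ ∑ i, (MvPolynomial.eval z (p i)) ^ 2 :=
    Finset.sum_nonneg fun i _ => sq_nonneg _
  linarith

lemma norm_pEval_le_NPoly {d : ℕ} (p : Fin d → MvPolynomial (Fin d) ℝ) (z : Fin d → ℝ) :
    ‖pEval p z‖ ≤ MvPolynomial.eval z (NPoly p) := by
  have h0 : (0:ℝ) ≤ MvPolynomial.eval z (NPoly p) := le_trans zero_le_one (one_le_eval_NPoly p z)
  apply pi_norm_le_iff_of_nonneg h0 |>.2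
  intro j
  simp only [pEval]
  rw [Real.norm_eq_abs, eval_NPoly]
  have h1 : (MvPolynomial.eval z (p j)) ^ 2 ≤ ∑ i, (MvPolynomial.eval z (p i)) ^ 2 :=
    Finset.single_le_sum (f := fun i => (MvPolynomial.eval z (p i)) ^ 2)
      (fun i _ => sq_nonneg _) (Finset.mem_univ j)
  nlinarith [abs_nonneg (MvPolynomial.eval z (p j)), sq_abs (MvPolynomial.eval z (p j)),
    sq_nonneg (|MvPolynomial.eval z (p j)| - 1)]

lemma eval_sPoly {d : ℕ} (p : Fin d → MvPolynomial (Fin d) ℝ) (z : Fin d → ℝ) :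
    MvPolynomial.eval z (sPoly p) = 1 + (MvPolynomial.eval z (gPoly p)) ^ 2 := by
  simp [sPoly]

lemma one_le_eval_sPoly {d : ℕ} (p : Fin d → MvPolynomial (Fin d) ℝ) (z : Fin d → ℝ) :
    1 ≤ MvPolynomial.eval z (sPoly p) := by
  rw [eval_sPoly]; nlinarith [sq_nonneg (MvPolynomial.eval z (gPoly p))]

lemma abs_gPoly_le_sPoly {d : ℕ} (p : Fin d → MvPolynomial (Fin d) ℝ) (z : Fin d → ℝ) :
    |MvPolynomial.eval z (gPoly p)| ≤ MvPolynomial.eval z (sPoly p) := by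
  rw [eval_sPoly]
  nlinarith [sq_abs (MvPolynomial.eval z (gPoly p)),
    sq_nonneg (|MvPolynomial.eval z (gPoly p)| - 1)]

lemma pEval_pNew_castSucc {d : ℕ} (p : Fin d → MvPolynomial (Fin d) ℝ)
    (a : Fin d → ℝ) (b : ℝ) (j : Fin d) :
    pEval (pNew p) (Fin.snoc a b) (Fin.castSucc j) = b * MvPolynomial.eval a (p j) := by
  simp [pEval, pNew, MvPolynomial.eval_rename, Fin.snoc_comp_castSucc]

lemma pEval_pNew_last {d : ℕ} (p : Fin d → MvPolynomial (Fin d) ℝ)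
    (a : Fin d → ℝ) (b : ℝ) :
    pEval (pNew p) (Fin.snoc a b) (Fin.last d)
      = -(MvPolynomial.eval a (sPoly p)) * b ^ 3 := by
  simp [pEval, pNew, MvPolynomial.eval_rename, Fin.snoc_comp_castSucc]
  ring

lemma pEval_qNew {n d : ℕ} (q : Fin d → MvPolynomial (Fin n) ℝ) (x : Fin n → ℝ) (μ : ℝ) :
    (fun i => MvPolynomial.eval (Fin.snoc x μ) (qNew q i))
      = Fin.snoc (fun i => MvPolynomial.eval x (q i)) 1 := by
  funext i
  refine Fin.lastCases ?_ (fun j => ?_) i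
  · simp [qNew]
  · simp [qNew, MvPolynomial.eval_rename, Fin.snoc_comp_castSucc]

lemma hasDerivAt_NPoly {d : ℕ} (p : Fin d → MvPolynomial (Fin d) ℝ)
    {y : ℝ → Fin d → ℝ} {t : ℝ} (hy : HasDerivAt y (pEval p (y t)) t) :
    HasDerivAt (fun s => MvPolynomial.eval (y s) (NPoly p))
      (MvPolynomial.eval (y t) (gPoly p)) t := by
  have h := mv_hasDerivAt (NPoly p) hy
  convert h using 1
  simp [gPoly, pEval]

lemma mv_growth_vec {k e : ℕ} (q : Fin e → MvPolynomial (Fin k) ℝ) :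
    ∃ C K, 0 ≤ C ∧ ∀ z : Fin k → ℝ, ‖pEval q z‖ ≤ C * (1 + ‖z‖) ^ K := by
  choose C K hC h using fun i => mv_growth (q i)
  have hCs : (0:ℝ) ≤ ∑ i, C i := Finset.sum_nonneg fun i _ => hC i
  refine ⟨(∑ i, C i) + 1, ∑ i, K i, by linarith, fun z => ?_⟩
  have hz : (1:ℝ) ≤ 1 + ‖z‖ := by linarith [norm_nonneg z]
  have h0 : (0:ℝ) ≤ ((∑ i, C i) + 1) * (1 + ‖z‖) ^ (∑ i, K i) :=
    mul_nonneg (by linarith) (by positivity)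
  apply pi_norm_le_iff_of_nonneg h0 |>.2
  intro j
  simp only [pEval, Real.norm_eq_abs]
  calc |MvPolynomial.eval z (q j)| ≤ C j * (1 + ‖z‖) ^ (K j) := h j z
    _ ≤ ((∑ i, C i) + 1) * (1 + ‖z‖) ^ (∑ i, K i) := by
        apply mul_le_mul
        · have : C j ≤ ∑ i, C i := Finset.single_le_sum (fun i _ => hC i) (Finset.mem_univ j)
          linarith
        · exact pow_le_pow_right₀ hz
            (Finset.single_le_sum (f := K) (fun i _ => Nat.zero_le _) (Finset.mem_univ j))
        · positivity
        · linarith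

lemma core {d : ℕ} (p : Fin d → MvPolynomial (Fin d) ℝ) (y : ℝ → Fin d → ℝ)
    (hyD : ∀ t : ℝ, 0 ≤ t → HasDerivAt y (pEval p (y t)) t) :
    ∃ (Y : ℝ → Fin (d+1) → ℝ) (lam : ℝ → ℝ),
      (Y 0 = Fin.snoc (y 0) 1) ∧
      (∀ t, 0 ≤ t → HasDerivAt Y (pEval (pNew p) (Y t)) t) ∧
      (∀ t, 0 ≤ t → ∀ j : Fin d, Y t (Fin.castSucc j) = y (lam t) j) ∧
      (∀ t, 0 ≤ t → |Y t (Fin.last d)| ≤ 1) ∧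
      (∀ t, 0 ≤ t → 0 ≤ lam t) ∧
      (∀ t, 0 ≤ t → ‖y (lam t)‖ ≤ ‖y 0‖ + MvPolynomial.eval (y 0) (NPoly p) * t) ∧
      (∀ T, 0 ≤ T → ∀ B : ℝ,
        (∀ τ, 0 ≤ τ → τ ≤ T → MvPolynomial.eval (y τ) (sPoly p) ≤ B) →
        ∀ t, T + T^2 * B ≤ t → T ≤ lam t) := by
  classical
  have hy_cont : ∀ τ : ℝ, 0 ≤ τ → ContinuousAt y τ := fun τ hτ => (hyD τ hτ).continuousAt
  set w : ℝ → Fin d → ℝ := fun s => y (max s 0) with hw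
  have hw_cont : Continuous w := by
    apply continuous_iff_continuousAt.2
    intro s
    have : ContinuousAt (y ∘ fun b : ℝ => max b 0) s :=
      ContinuousAt.comp (hy_cont _ (le_max_right s 0))
        ((continuous_id.max continuous_const).continuousAt)
    exact this
  have hw_eq : ∀ s, 0 ≤ s → w s = y s := fun s hs => by simp [hw, max_eq_left hs]
  set σy : ℝ → ℝ := fun s => MvPolynomial.eval (w s) (sPoly p) with hσy
  have hσy_cont : Continuous σy := (MvPolynomial.continuous_eval _).comp hw_cont
  have hσy_one : ∀ s, 1 ≤ σy s := fun s => one_le_eval_sPoly p (w s)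
  set S : ℝ → ℝ := fun τ => ∫ s in (0:ℝ)..τ, σy s with hSdef
  have hS_deriv : ∀ τ, HasDerivAt S (σy τ) τ := fun τ =>
    intervalIntegral.integral_hasDerivAt_right (hσy_cont.intervalIntegrable _ _)
      (hσy_cont.stronglyMeasurableAtFilter _ _) hσy_cont.continuousAt
  have hS_cont : Continuous S :=
    (Differentiable.continuous (fun τ => (hS_deriv τ).differentiableAt))
  have hS0 : S 0 = 0 := intervalIntegral.integral_same
  have hS_mono : StrictMono S := strictMono_of_deriv_pos
    (fun τ => by rw [(hS_deriv τ).deriv]; linarith [hσy_one τ])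
  have hS_ge : ∀ τ, 0 ≤ τ → τ ≤ S τ := by
    intro τ hτ
    have h1 : ∫ s in (0:ℝ)..τ, (1:ℝ) ≤ ∫ s in (0:ℝ)..τ, σy s :=
      intervalIntegral.integral_mono_on hτ intervalIntegrable_const
        (hσy_cont.intervalIntegrable _ _) (fun s _ => hσy_one s)
    simpa using h1
  have hS_nonneg : ∀ τ, 0 ≤ τ → 0 ≤ S τ := fun τ hτ => le_trans hτ (hS_ge τ hτ)
  set Sp : ℝ → ℝ := fun τ => max (S τ) 0 with hSpdef
  have hSp_cont : Continuous Sp := hS_cont.max continuous_const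
  have hSp_nonneg : ∀ τ, 0 ≤ Sp τ := fun τ => le_max_right _ _
  have hSp_eq : ∀ τ, 0 ≤ τ → Sp τ = S τ := fun τ hτ => max_eq_left (hS_nonneg τ hτ)
  have hSp_mono : Monotone Sp := hS_mono.monotone.max monotone_const
  set G : ℝ → ℝ := fun τ => τ + ∫ s in (0:ℝ)..τ, Sp s with hGdef
  have hG_deriv : ∀ τ, HasDerivAt G (1 + Sp τ) τ := fun τ =>
    (hasDerivAt_id τ).add (intervalIntegral.integral_hasDerivAt_right
      (hSp_cont.intervalIntegrable _ _) (hSp_cont.stronglyMeasurableAtFilter _ _)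
      hSp_cont.continuousAt)
  have hG_cont : Continuous G :=
    (Differentiable.continuous (fun τ => (hG_deriv τ).differentiableAt))
  have hG_mono : StrictMono G := strictMono_of_deriv_pos
    (fun τ => by rw [(hG_deriv τ).deriv]; linarith [hSp_nonneg τ])
  have hG0 : G 0 = 0 := by simp [hGdef]
  have hG_ge : ∀ τ, 0 ≤ τ → τ ≤ G τ := by
    intro τ hτ
    have h : (0:ℝ) ≤ ∫ s in (0:ℝ)..τ, Sp s :=
      intervalIntegral.integral_nonneg hτ (fun s _ => hSp_nonneg s)
    simp only [hGdef]; linarith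
  have hG_le : ∀ τ, τ ≤ 0 → G τ ≤ τ := by
    intro τ hτ
    have h : (0:ℝ) ≤ ∫ s in τ..(0:ℝ), Sp s :=
      intervalIntegral.integral_nonneg hτ (fun s _ => hSp_nonneg s)
    have h2 : (∫ s in (0:ℝ)..τ, Sp s) = -∫ s in τ..(0:ℝ), Sp s :=
      intervalIntegral.integral_symm τ 0
    simp only [hGdef, h2]; linarith
  have hG_surj : Function.Surjective G := by
    intro t
    have h1 : (-(1+|t|)) ≤ (1+|t|) := by linarith [abs_nonneg t]
    have ha : G (-(1+|t|)) ≤ t := by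
      have := hG_le (-(1+|t|)) (by linarith [abs_nonneg t])
      have h2 := neg_abs_le t
      linarith
    have hb : t ≤ G (1+|t|) := by
      have := hG_ge (1+|t|) (by linarith [abs_nonneg t])
      have h2 := le_abs_self t
      linarith
    obtain ⟨τ, _, hτ⟩ := intermediate_value_Icc h1 hG_cont.continuousOn
      (Set.mem_Icc.2 ⟨ha, hb⟩)
    exact ⟨τ, hτ⟩
  set e := StrictMono.orderIsoOfSurjective G hG_mono hG_surj with he
  set lam : ℝ → ℝ := fun t => e.symm t with hlamdef
  have hGlam : ∀ t, G (lam t) = t := fun t =>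
    StrictMono.orderIsoOfSurjective_self_symm_apply G hG_mono hG_surj t
  have hlamG : ∀ τ, lam (G τ) = τ := fun τ =>
    StrictMono.orderIsoOfSurjective_symm_apply_self G hG_mono hG_surj τ
  have hlam_mono : Monotone lam := fun a b hab => e.symm.monotone hab
  have hlam_cont : Continuous lam := e.symm.continuous
  have hlam0 : lam 0 = 0 := by
    have h := hlamG 0; rw [hG0] at h; exact h
  have hlam_nonneg : ∀ t, 0 ≤ t → 0 ≤ lam t := fun t ht => by
    rw [← hlam0]; exact hlam_mono ht
  have h1Sp_pos : ∀ τ, 0 < 1 + Sp τ := fun τ => by linarith [hSp_nonneg τ]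
  have hlam_deriv : ∀ t, HasDerivAt lam (1 + Sp (lam t))⁻¹ t := fun t =>
    HasDerivAt.of_local_left_inverse hlam_cont.continuousAt (hG_deriv (lam t))
      (ne_of_gt (h1Sp_pos (lam t))) (Filter.Eventually.of_forall hGlam)
  set u : ℝ → ℝ := fun t => (1 + S (lam t))⁻¹ with hudef
  have h1S_pos : ∀ t, 0 ≤ t → 0 < 1 + S (lam t) := fun t ht => by
    linarith [hS_nonneg (lam t) (hlam_nonneg t ht)]
  have hu_pos : ∀ t, 0 ≤ t → 0 < u t := fun t ht => inv_pos.2 (h1S_pos t ht)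
  have hu_eq : ∀ t, 0 ≤ t → (1 + Sp (lam t))⁻¹ = u t := fun t ht => by
    rw [hudef]; rw [hSp_eq (lam t) (hlam_nonneg t ht)]
  have hu_le_one : ∀ t, 0 ≤ t → u t ≤ 1 := by
    intro t ht
    rw [hudef]
    have h1 : (1:ℝ) ≤ 1 + S (lam t) := by linarith [hS_nonneg (lam t) (hlam_nonneg t ht)]
    exact inv_le_one_of_one_le₀ h1
  have hu_deriv : ∀ t, 0 ≤ t →
      HasDerivAt u (-(MvPolynomial.eval (y (lam t)) (sPoly p)) * (u t)^3) t := by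
    intro t ht
    have hlamt := hlam_nonneg t ht
    have hSl : HasDerivAt (fun s => 1 + S (lam s)) (σy (lam t) * (1 + Sp (lam t))⁻¹) t :=
      ((hS_deriv (lam t)).comp t (hlam_deriv t)).const_add 1
    have hinv := hSl.inv (ne_of_gt (h1S_pos t ht))
    have : -(σy (lam t) * (1 + Sp (lam t))⁻¹) / (1 + S (lam t)) ^ 2
        = -(MvPolynomial.eval (y (lam t)) (sPoly p)) * (u t)^3 := by
      rw [hSp_eq (lam t) hlamt, ← hw_eq (lam t) hlamt]
      show -(σy (lam t) * (1 + S (lam t))⁻¹) / (1 + S (lam t)) ^ 2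
        = -(σy (lam t)) * ((1 + S (lam t))⁻¹)^3
      have h2 := h1S_pos t ht
      rw [div_eq_mul_inv, ← inv_pow]
      ring
    rw [← this]
    exact hinv
  set Z : ℝ → Fin (d+1) → ℝ := fun t => Fin.snoc (y (lam t)) (u t) with hZdef
  have hZcast : ∀ t j, Z t (Fin.castSucc j) = y (lam t) j := fun t j => by
    simp [hZdef]
  have hZlast : ∀ t, Z t (Fin.last d) = u t := fun t => by simp [hZdef]
  have hZD : ∀ t, 0 ≤ t → HasDerivAt Z (pEval (pNew p) (Z t)) t := by
    intro t ht
    have hlamt := hlam_nonneg t ht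
    apply hasDerivAt_pi.2
    intro i
    refine Fin.lastCases ?_ (fun j => ?_) i
    · have hval : pEval (pNew p) (Z t) (Fin.last d)
          = -(MvPolynomial.eval (y (lam t)) (sPoly p)) * (u t)^3 := by
        rw [hZdef]; exact pEval_pNew_last p _ _
      rw [hval]
      have := hu_deriv t ht
      simp only [hZdef, Fin.snoc_last]
      exact this
    · have hval : pEval (pNew p) (Z t) (Fin.castSucc j)
          = u t * MvPolynomial.eval (y (lam t)) (p j) := by
        rw [hZdef]; exact pEval_pNew_castSucc p _ _ j
      rw [hval]
      simp only [hZdef, Fin.snoc_castSucc]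
      have hcomp : HasDerivAt (y ∘ lam)
          ((1 + Sp (lam t))⁻¹ • pEval p (y (lam t))) t :=
        (hyD (lam t) hlamt).scomp t (hlam_deriv t)
      have hj := hasDerivAt_pi.1 hcomp j
      have : ((1 + Sp (lam t))⁻¹ • pEval p (y (lam t))) j
          = u t * MvPolynomial.eval (y (lam t)) (p j) := by
        rw [Pi.smul_apply, smul_eq_mul, hu_eq t ht]; rfl
      rw [this] at hj
      exact hj
  set V : Fin (d+1) → ℝ := pEval (pNew p) (Z 0) with hVdef
  set Y : ℝ → Fin (d+1) → ℝ := fun t => if 0 ≤ t then Z t else Z 0 + t • V with hYdef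
  have hYZ : ∀ t, 0 ≤ t → Y t = Z t := fun t ht => by simp [hYdef, ht]
  have hY0 : Y 0 = Fin.snoc (y 0) 1 := by
    rw [hYZ 0 le_rfl, hZdef]
    simp [hlam0, hudef, hS0]
  have hYD : ∀ t, 0 ≤ t → HasDerivAt Y (pEval (pNew p) (Y t)) t := by
    intro t ht
    rw [hYZ t ht]
    rcases eq_or_lt_of_le ht with h0|htpos
    · subst h0
      have hright : HasDerivWithinAt Y V (Set.Ici 0) 0 :=
        ((hZD 0 le_rfl).hasDerivWithinAt).congr (fun s hs => hYZ s hs) (hYZ 0 le_rfl)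
      have hleft : HasDerivWithinAt Y V (Set.Iic 0) 0 := by
        have hlin : HasDerivAt (fun s : ℝ => Z 0 + s • V) V 0 := by
          simpa using ((hasDerivAt_id (0:ℝ)).smul_const V).const_add (Z 0)
        refine (hlin.hasDerivWithinAt).congr (fun s hs => ?_) ?_
        · rcases lt_or_eq_of_le (Set.mem_Iic.1 hs) with h|h
          · simp [hYdef, not_le.2 h]
          · subst h; rw [hYZ 0 le_rfl]; simp
        · rw [hYZ 0 le_rfl]; simp
      have huni := hleft.union hright
      rw [Set.Iic_union_Ici, hasDerivWithinAt_univ] at huni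
      exact huni
    · have hfin : Z =ᶠ[nhds t] Y := by
        filter_upwards [Ioi_mem_nhds htpos] with s hs
        exact (hYZ s (le_of_lt hs)).symm
      exact (hZD t ht).congr_of_eventuallyEq hfin.symm
  set N0 : ℝ := MvPolynomial.eval (y 0) (NPoly p) with hN0def
  have hN0_one : 1 ≤ N0 := one_le_eval_NPoly p (y 0)
  set F : ℝ → ℝ := fun τ => MvPolynomial.eval (y τ) (NPoly p) - N0 * (1 + S τ) with hFdef
  have hF_deriv : ∀ τ, 0 ≤ τ →
      HasDerivAt F (MvPolynomial.eval (y τ) (gPoly p) - N0 * σy τ) τ := fun τ hτ =>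
    (hasDerivAt_NPoly p (hyD τ hτ)).sub (((hS_deriv τ).const_add 1).const_mul N0)
  have hF_anti : AntitoneOn F (Set.Ici 0) := by
    apply antitoneOn_of_deriv_nonpos (convex_Ici 0)
    · exact fun τ hτ => ((hF_deriv τ hτ).continuousAt.continuousWithinAt)
    · intro τ hτ
      rw [interior_Ici] at hτ
      exact ((hF_deriv τ (le_of_lt hτ)).differentiableAt.differentiableWithinAt)
    · intro τ hτ
      rw [interior_Ici] at hτ
      have hτ0 : (0:ℝ) ≤ τ := le_of_lt hτ
      rw [(hF_deriv τ hτ0).deriv]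
      have h1 : σy τ = MvPolynomial.eval (y τ) (sPoly p) := by
        simp only [hσy]; rw [hw_eq τ hτ0]
      have h2 := abs_gPoly_le_sPoly p (y τ)
      have h3 := one_le_eval_sPoly p (y τ)
      have h4 := le_abs_self (MvPolynomial.eval (y τ) (gPoly p))
      rw [h1]
      nlinarith
  have hInv : ∀ τ, 0 ≤ τ → MvPolynomial.eval (y τ) (NPoly p) ≤ N0 * (1 + S τ) := by
    intro τ hτ
    have h := hF_anti (Set.mem_Ici.2 le_rfl) hτ hτ
    simp only [hFdef, hS0] at h
    nlinarith
  have hspeed : ∀ s, 0 ≤ s → ‖u s • pEval p (y (lam s))‖ ≤ N0 := by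
    intro s hs
    have hl := hlam_nonneg s hs
    rw [norm_smul, Real.norm_eq_abs, abs_of_pos (hu_pos s hs)]
    have h1 : ‖pEval p (y (lam s))‖ ≤ MvPolynomial.eval (y (lam s)) (NPoly p) :=
      norm_pEval_le_NPoly p _
    have h2 := hInv (lam s) hl
    have h3 := h1S_pos s hs
    calc u s * ‖pEval p (y (lam s))‖ ≤ u s * (N0 * (1 + S (lam s))) :=
          mul_le_mul_of_nonneg_left (h1.trans h2) (le_of_lt (hu_pos s hs))
      _ = N0 := by rw [hudef]; field_simp
  have hnormy : ∀ t, 0 ≤ t → ‖y (lam t)‖ ≤ ‖y 0‖ + N0 * t := by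
    intro t ht
    have key : ‖(y ∘ lam) t - (y ∘ lam) 0‖ ≤ N0 * ‖t - 0‖ := by
      apply Convex.norm_image_sub_le_of_norm_hasDerivWithin_le
        (f' := fun s => u s • pEval p (y (lam s)))
        (fun s hs => ?_) (fun s hs => hspeed s hs) (convex_Ici 0) (Set.mem_Ici.2 le_rfl) ht
      have hcomp : HasDerivAt (y ∘ lam)
          ((1 + Sp (lam s))⁻¹ • pEval p (y (lam s))) s :=
        (hyD (lam s) (hlam_nonneg s hs)).scomp s (hlam_deriv s)
      rw [hu_eq s hs] at hcomp
      exact hcomp.hasDerivWithinAt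
    simp only [Function.comp, hlam0, sub_zero, Real.norm_eq_abs, abs_of_nonneg ht] at key
    calc ‖y (lam t)‖ = ‖y 0 + (y (lam t) - y 0)‖ := by rw [add_sub_cancel]
      _ ≤ ‖y 0‖ + ‖y (lam t) - y 0‖ := norm_add_le _ _
      _ ≤ ‖y 0‖ + N0 * t := by linarith
  have htime : ∀ T, 0 ≤ T → ∀ B : ℝ,
      (∀ τ, 0 ≤ τ → τ ≤ T → MvPolynomial.eval (y τ) (sPoly p) ≤ B) →
      ∀ t, T + T^2 * B ≤ t → T ≤ lam t := by
    intro T hT B hB t hle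
    have hST : S T ≤ T * B := by
      have h1 : ∫ s in (0:ℝ)..T, σy s ≤ ∫ s in (0:ℝ)..T, B :=
        intervalIntegral.integral_mono_on hT (hσy_cont.intervalIntegrable _ _)
          intervalIntegrable_const
          (fun s hs => by
            simp only [hσy]; rw [hw_eq s hs.1]; exact hB s hs.1 hs.2)
      simpa using h1
    have hGT : G T ≤ T + T^2 * B := by
      have h1 : ∫ s in (0:ℝ)..T, Sp s ≤ ∫ s in (0:ℝ)..T, Sp T :=
        intervalIntegral.integral_mono_on hT (hSp_cont.intervalIntegrable _ _)
          intervalIntegrable_const (fun s hs => hSp_mono hs.2)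
      have h2 : Sp T ≤ T * B := by rw [hSp_eq T hT]; exact hST
      have h3 : ∫ s in (0:ℝ)..T, Sp T = T * Sp T := by simp [mul_comm]
      have h4 : T * Sp T ≤ T * (T * B) := mul_le_mul_of_nonneg_left h2 hT
      have h5 : G T = T + ∫ s in (0:ℝ)..T, Sp s := rfl
      rw [h5]
      rw [h3] at h1
      nlinarith
    calc T = lam (G T) := (hlamG T).symm
      _ ≤ lam t := hlam_mono (le_trans hGT hle)
  refine ⟨Y, lam, hY0, hYD, ?_, ?_, hlam_nonneg, hnormy, htime⟩
  · intro t ht j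
    rw [hYZ t ht]
    exact hZcast t j
  · intro t ht
    rw [hYZ t ht, hZlast t]
    rw [abs_of_pos (hu_pos t ht)]
    exact hu_le_one t ht

lemma pLen_facts {d : ℕ} (p : Fin d → MvPolynomial (Fin d) ℝ) (y : ℝ → Fin d → ℝ)
    (hyD : ∀ t : ℝ, 0 ≤ t → HasDerivAt y (pEval p (y t)) t)
    (hlen : ∀ t : ℝ, 0 ≤ t → t ≤ pLen p y t) (L : ℝ) (hL : 0 ≤ L) :
    ∃ T, 0 ≤ T ∧ T ≤ L ∧
      (∀ τ, 0 ≤ τ → τ ≤ T → ‖y τ‖ ≤ ‖y 0‖ + L) ∧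
      (∀ τ, T ≤ τ → L ≤ pLen p y τ) := by
  classical
  have hy_cont : ∀ τ : ℝ, 0 ≤ τ → ContinuousAt y τ := fun τ hτ => (hyD τ hτ).continuousAt
  set w : ℝ → Fin d → ℝ := fun s => y (max s 0) with hw
  have hw_cont : Continuous w := by
    apply continuous_iff_continuousAt.2
    intro s
    have : ContinuousAt (y ∘ fun b : ℝ => max b 0) s :=
      ContinuousAt.comp (hy_cont _ (le_max_right s 0))
        ((continuous_id.max continuous_const).continuousAt)
    exact this
  have hw_eq : ∀ s : ℝ, 0 ≤ s → w s = y s := fun s hs => by simp [hw, max_eq_left hs]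
  have hpe_cont : Continuous fun z : Fin d → ℝ => pEval p z :=
    continuous_pi fun i => MvPolynomial.continuous_eval _
  have hD_cont : Continuous fun s => ‖pEval p (w s)‖ := (hpe_cont.comp hw_cont).norm
  set ℓ : ℝ → ℝ := fun τ => ∫ s in (0:ℝ)..τ, ‖pEval p (w s)‖ with hℓdef
  have hℓ_deriv : ∀ τ, HasDerivAt ℓ (‖pEval p (w τ)‖) τ := fun τ =>
    intervalIntegral.integral_hasDerivAt_right (hD_cont.intervalIntegrable _ _)
      (hD_cont.stronglyMeasurableAtFilter _ _) hD_cont.continuousAt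
  have hℓ_cont : Continuous ℓ :=
    Differentiable.continuous fun τ => (hℓ_deriv τ).differentiableAt
  have hℓ_eq : ∀ τ, 0 ≤ τ → pLen p y τ = ℓ τ := by
    intro τ hτ
    apply intervalIntegral.integral_congr
    intro s hs
    rw [Set.uIcc_of_le hτ] at hs
    show ‖pEval p (y s)‖ = ‖pEval p (w s)‖
    rw [hw_eq s hs.1]
  have hℓ_mono : Monotone ℓ := by
    intro a b hab
    have h1 : ℓ a + ∫ s in a..b, ‖pEval p (w s)‖ = ℓ b :=
      intervalIntegral.integral_add_adjacent_intervals
        (hD_cont.intervalIntegrable _ _) (hD_cont.intervalIntegrable _ _)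
    have h2 : (0:ℝ) ≤ ∫ s in a..b, ‖pEval p (w s)‖ :=
      intervalIntegral.integral_nonneg hab (fun s _ => norm_nonneg _)
    linarith
  set A : Set ℝ := {τ | 0 ≤ τ ∧ L ≤ ℓ τ} with hA
  have hA_closed : IsClosed A := by
    apply IsClosed.inter
    · exact isClosed_le continuous_const continuous_id
    · exact isClosed_le continuous_const hℓ_cont
  have hA_ne : A.Nonempty := by
    refine ⟨L, hL, ?_⟩
    rw [← hℓ_eq L hL]
    exact hlen L hL
  have hA_bdd : BddBelow A := ⟨0, fun τ hτ => hτ.1⟩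
  set T := sInf A with hT
  have hT_mem : T ∈ A := hA_closed.csInf_mem hA_ne hA_bdd
  have hT0 : 0 ≤ T := hT_mem.1
  have hTL : T ≤ L := csInf_le hA_bdd ⟨hL, by rw [← hℓ_eq L hL]; exact hlen L hL⟩
  have hℓT : L ≤ ℓ T := hT_mem.2
  -- on [0, T], ℓ ≤ L
  have hprefix : ∀ τ, 0 ≤ τ → τ ≤ T → ℓ τ ≤ L := by
    intro τ hτ0 hτT
    rcases eq_or_lt_of_le hT0 with h0|hTpos
    · have : τ = 0 := le_antisymm (h0 ▸ hτT) hτ0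
      subst this
      have : ℓ 0 = 0 := intervalIntegral.integral_same
      linarith
    · have hsub : Set.Ico (0:ℝ) T ⊆ {τ | ℓ τ ≤ L} := by
        intro s hs
        have hns : s ∉ A := notMem_of_lt_csInf hs.2 hA_bdd
        by_contra hcon
        exact hns ⟨hs.1, le_of_lt (not_le.1 hcon)⟩
      have hclosed : IsClosed {τ | ℓ τ ≤ L} := isClosed_le hℓ_cont continuous_const
      have hsub2 : Set.Icc (0:ℝ) T ⊆ {τ | ℓ τ ≤ L} := by
        rw [← closure_Ico (ne_of_lt hTpos)]
        exact hclosed.closure_subset_iff.2 hsub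
      exact hsub2 ⟨hτ0, hτT⟩
  -- norm bound
  have hnorm : ∀ τ, 0 ≤ τ → ‖y τ‖ ≤ ‖y 0‖ + ℓ τ := by
    intro τ hτ
    have hint : IntervalIntegrable (fun s => pEval p (y s)) MeasureTheory.volume 0 τ := by
      apply ContinuousOn.intervalIntegrable
      intro s hs
      rw [Set.uIcc_of_le hτ] at hs
      exact (hpe_cont.continuousAt.comp (hy_cont s hs.1)).continuousWithinAt
    have hFTC : ∫ s in (0:ℝ)..τ, pEval p (y s) = y τ - y 0 :=
      intervalIntegral.integral_eq_sub_of_hasDerivAt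
        (fun s hs => hyD s (by rw [Set.uIcc_of_le hτ] at hs; exact hs.1)) hint
    have hbound : ‖∫ s in (0:ℝ)..τ, pEval p (y s)‖ ≤ ∫ s in (0:ℝ)..τ, ‖pEval p (y s)‖ :=
      intervalIntegral.norm_integral_le_integral_norm hτ
    have h2 : (∫ s in (0:ℝ)..τ, ‖pEval p (y s)‖) = ℓ τ := hℓ_eq τ hτ
    rw [hFTC] at hbound
    calc ‖y τ‖ = ‖y 0 + (y τ - y 0)‖ := by rw [add_sub_cancel]
      _ ≤ ‖y 0‖ + ‖y τ - y 0‖ := norm_add_le _ _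
      _ ≤ ‖y 0‖ + ℓ τ := by rw [← h2]; linarith
  refine ⟨T, hT0, hTL, ?_, ?_⟩
  · intro τ hτ0 hτT
    calc ‖y τ‖ ≤ ‖y 0‖ + ℓ τ := hnorm τ hτ0
      _ ≤ ‖y 0‖ + L := by linarith [hprefix τ hτ0 hτT]
  · intro τ hτT
    have hτ0 : 0 ≤ τ := le_trans hT0 hτT
    rw [hℓ_eq τ hτ0]
    exact le_trans hℓT (hℓ_mono hτT)

end AuxiliaryLemmas

/-- **`AP ⊆ AWP`**: every partial function in `AP` also belongs to `AWP`. -/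
theorem ap_subset_awp {n m : ℕ} (dom : Set (Fin n → ℝ))
    (f : (Fin n → ℝ) → (Fin m → ℝ)) (hf : AP dom f) : AWP dom f := by
  classical
  obtain ⟨d, hd, p, q, Ω, hΩ, hAP⟩ := hf
  obtain ⟨PΩ, hPΩ⟩ := hΩ.1
  obtain ⟨Cq, Kq, hCq, hq⟩ := mv_growth_vec q
  obtain ⟨CN, KN, hCN, hN⟩ := mv_growth (NPoly p)
  obtain ⟨Cσ, Kσ, hCσ, hσb⟩ := mv_growth (sPoly p)
  set Qb : ℝ → ℝ := fun a => Cq * (1 + a) ^ Kq with hQbdef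
  set Nb : ℝ → ℝ := fun a => CN * (1 + Qb a) ^ KN with hNbdef
  set Ωn : ℝ → ℝ → ℝ :=
    fun a b => Ω a b + (Ω a b) ^ 2 * (Cσ * (1 + (Qb a + Ω a b)) ^ Kσ) with hΩndef
  set Υn : ℝ → ℝ → ℝ → ℝ := fun a b c => 1 + Qb a + Nb a * c with hΥndef
  have hQb_nonneg : ∀ a : ℝ, 0 ≤ a → 0 ≤ Qb a := by
    intro a ha
    simp only [hQbdef]
    positivity
  have hNb_nonneg : ∀ a : ℝ, 0 ≤ a → 0 ≤ Nb a := by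
    intro a ha
    have := hQb_nonneg a ha
    simp only [hNbdef]
    positivity
  have hΩn_poly : IsPolyFun2 Ωn := by
    constructor
    · refine ⟨PΩ + PΩ ^ 2 * (MvPolynomial.C Cσ *
        (1 + (MvPolynomial.C Cq * (1 + MvPolynomial.X 0) ^ Kq + PΩ)) ^ Kσ), fun a b => ?_⟩
      simp only [map_add, map_mul, map_pow, MvPolynomial.eval_C, MvPolynomial.eval_X,
        map_one, Matrix.cons_val_zero]
      rw [← hPΩ a b]
    · intro a b ha hb
      have h1 := hΩ.2 a b ha hb
      have h2 := hQb_nonneg a ha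
      simp only [hΩndef]
      positivity
  have hΥn_poly : IsPolyFun3 Υn := by
    constructor
    · refine ⟨1 + MvPolynomial.C Cq * (1 + MvPolynomial.X 0) ^ Kq +
        (MvPolynomial.C CN * (1 + MvPolynomial.C Cq * (1 + MvPolynomial.X 0) ^ Kq) ^ KN) *
          MvPolynomial.X 2, fun a b c => ?_⟩
      simp only [map_add, map_mul, map_pow, MvPolynomial.eval_C, MvPolynomial.eval_X,
        map_one, Matrix.cons_val_zero]
      rfl
    · intro a b c ha hb hc
      have h2 := hQb_nonneg a ha
      have h3 := hNb_nonneg a ha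
      simp only [hΥndef]
      positivity
  refine ⟨Ωn, Υn, hΩn_poly, hΥn_poly, d + 1, Nat.le_succ_of_le hd, pNew p, qNew q, ?_⟩
  intro x hx μ hμ
  obtain ⟨y, hy0, hyD, hyconv, hylen⟩ := hAP x hx
  obtain ⟨Y, lam, hY0, hYD, hYcomp, hYlast, hlam_nonneg, hnormy, htime⟩ := core p y hyD
  set L : ℝ := Ω ‖x‖ μ with hLdef
  have hL0 : 0 ≤ L := hΩ.2 _ _ (norm_nonneg x) hμ
  obtain ⟨T, hT0, hTL, hTnorm, hTlen⟩ := pLen_facts p y hyD hylen L hL0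
  have hy0norm : ‖y 0‖ ≤ Qb ‖x‖ := by
    rw [hy0]
    exact hq x
  have hxn : (0:ℝ) ≤ ‖x‖ := norm_nonneg x
  have hQbx : 0 ≤ Qb ‖x‖ := hQb_nonneg _ hxn
  have hN0b : MvPolynomial.eval (y 0) (NPoly p) ≤ Nb ‖x‖ := by
    have h1 := hN (y 0)
    have h2 := le_abs_self (MvPolynomial.eval (y 0) (NPoly p))
    have h3 : CN * (1 + ‖y 0‖) ^ KN ≤ CN * (1 + Qb ‖x‖) ^ KN := by
      gcongr <;> linarith [norm_nonneg (y 0)]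
    simp only [hNbdef]
    linarith
  refine ⟨Y, ?_, hYD, ?_, ?_⟩
  · rw [pEval_qNew q x μ, hY0, hy0]
  · intro t ht hΩt
    set B : ℝ := Cσ * (1 + (Qb ‖x‖ + L)) ^ Kσ with hBdef
    have hB0 : 0 ≤ B := by
      simp only [hBdef]
      positivity
    have hBσ : ∀ τ, 0 ≤ τ → τ ≤ T → MvPolynomial.eval (y τ) (sPoly p) ≤ B := by
      intro τ h1 h2
      have h3 := hσb (y τ)
      have h4 := hTnorm τ h1 h2
      have h5 : ‖y τ‖ ≤ Qb ‖x‖ + L := by linarith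
      have h6 := le_abs_self (MvPolynomial.eval (y τ) (sPoly p))
      have h7 : Cσ * (1 + ‖y τ‖) ^ Kσ ≤ B := by
        simp only [hBdef]
        gcongr <;> linarith [norm_nonneg (y τ)]
      linarith
    have hTt : T ≤ lam t := by
      apply htime T hT0 B hBσ t
      have h0 : T ^ 2 ≤ L ^ 2 := by nlinarith
      have h1 : T + T ^ 2 * B ≤ L + L ^ 2 * B := by
        have := mul_le_mul_of_nonneg_right h0 hB0
        linarith
      have h2 : L + L ^ 2 * B = Ωn ‖x‖ μ := rfl
      linarith
    have hlen2 : L ≤ pLen p y (lam t) := hTlen (lam t) hTt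
    have hconv := hyconv (lam t) (hlam_nonneg t ht) μ hμ hlen2
    have hvec : (fun i : Fin m => Y t (Fin.castLE (Nat.le_succ_of_le hd) i))
        = fun i : Fin m => y (lam t) (Fin.castLE hd i) := by
      funext i
      have hcast : Fin.castLE (Nat.le_succ_of_le hd) i
          = Fin.castSucc (Fin.castLE hd i) := rfl
      rw [hcast, hYcomp t ht (Fin.castLE hd i)]
    rw [hvec]
    exact hconv
  · intro t ht
    have hΥ0 : 0 ≤ Υn ‖x‖ μ t := by
      have := hNb_nonneg _ hxn
      simp only [hΥndef]
      nlinarith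
    apply pi_norm_le_iff_of_nonneg hΥ0 |>.2
    intro i
    refine Fin.lastCases ?_ (fun j => ?_) i
    · rw [Real.norm_eq_abs]
      have h1 := hYlast t ht
      have h2 := hNb_nonneg _ hxn
      simp only [hΥndef]
      nlinarith
    · rw [Real.norm_eq_abs]
      have h1 : |y (lam t) j| ≤ ‖y (lam t)‖ := by
        have := norm_le_pi_norm (y (lam t)) j
        simpa [Real.norm_eq_abs] using this
      have h2 := hnormy t ht
      have h3 : MvPolynomial.eval (y 0) (NPoly p) * t ≤ Nb ‖x‖ * t :=
        mul_le_mul_of_nonneg_right hN0b ht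
      have h4 := hYcomp t ht j
      rw [h4]
      simp only [hΥndef]
      nlinarith
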